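/- Let Z be a standard normal random variable and m(z) = E[Z - z | Z > z]. Then for all z < 0 one has max{|z|, √(2/π)} < m(z) < √(2/π) + |z|. -/

import Mathlib

open MeasureTheory Set

/-- The conditional mean overshoot `m z = E[Z - z | Z > z]` for a standard normal `Z`. -/
noncomputable def condMean (z : ℝ) : ℝ :=
  Real.exp (-z ^ 2 / 2) / (∫ t in Set.Ioi z, Real.exp (-t ^ 2 / 2)) - z

lemma gauss_integrable : Integrable (fun t : ℝ => Real.exp (-t ^ 2 / 2)) := by
  have h := integrable_exp_neg_mul_sq (by norm_num : (0:ℝ) < 1/2)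
  convert h using 2 with t
  ring_nf

lemma gauss_int_pos (z : ℝ) : 0 < ∫ t in Set.Ioi z, Real.exp (-t ^ 2 / 2) := by
  rw [setIntegral_pos_iff_support_of_nonneg_ae]
  · have : Function.support (fun t : ℝ => Real.exp (-t ^ 2 / 2)) = Set.univ := by
      ext t; simp [Function.mem_support, Real.exp_ne_zero]
    rw [this, Set.univ_inter]
    simp [Real.volume_Ioi]
  · filter_upwards with t using (Real.exp_pos _).le
  · exact gauss_integrable.integrableOn

lemma gauss_int_zero : (∫ t in Set.Ioi (0:ℝ), Real.exp (-t ^ 2 / 2)) = Real.sqrt (Real.pi / 2) := by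
  have h := integral_gaussian_Ioi (1/2)
  have h2 : (∫ t in Set.Ioi (0:ℝ), Real.exp (-t ^ 2 / 2)) = ∫ x in Set.Ioi (0:ℝ), Real.exp (-(1/2) * x ^ 2) := by
    congr 1 with t; ring_nf
  rw [h2, h]
  rw [show Real.pi / (1/2) = 2 * Real.pi by ring]
  rw [show Real.pi / 2 = (2 * Real.pi) / 4 by ring]
  rw [Real.sqrt_div (by positivity : (0:ℝ) ≤ 2 * Real.pi)]
  rw [show (4:ℝ) = 2^2 by norm_num, Real.sqrt_sq (by norm_num : (0:ℝ) ≤ 2)]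

lemma gauss_int_split {z : ℝ} (hz : z ≤ 0) :
    (∫ t in Set.Ioi z, Real.exp (-t ^ 2 / 2)) =
      (∫ t in Set.Ioc z 0, Real.exp (-t ^ 2 / 2)) + ∫ t in Set.Ioi (0:ℝ), Real.exp (-t ^ 2 / 2) := by
  rw [← setIntegral_union (Set.Ioc_disjoint_Ioi le_rfl) measurableSet_Ioi
      gauss_integrable.integrableOn gauss_integrable.integrableOn,
    Set.Ioc_union_Ioi_eq_Ioi hz]

theorem condMean_bounds_neg :
    ∀ z : ℝ, z < 0 →
      max |z| (Real.sqrt (2 / Real.pi)) < condMean z ∧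
      condMean z < Real.sqrt (2 / Real.pi) + |z| := by
  intro z hz
  have hpi := Real.pi_gt_three
  set c := Real.sqrt (2 / Real.pi) with hc
  set S := Real.sqrt (Real.pi / 2) with hS
  set I := ∫ t in Set.Ioi z, Real.exp (-t ^ 2 / 2) with hIdef
  set E := Real.exp (-z ^ 2 / 2) with hEdef
  have hIpos : 0 < I := gauss_int_pos z
  have hEpos : 0 < E := Real.exp_pos _
  have hSpos : 0 < S := Real.sqrt_pos.mpr (by positivity)
  have hcpos : 0 < c := Real.sqrt_pos.mpr (by positivity)
  have hcS : c * S = 1 := by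
    rw [hc, hS, ← Real.sqrt_mul (by positivity),
      show 2 / Real.pi * (Real.pi / 2) = 1 by field_simp, Real.sqrt_one]
  have hcltS : c < S := by
    apply Real.sqrt_lt_sqrt (by positivity)
    rw [div_lt_div_iff₀ (by positivity) (by norm_num)]
    nlinarith
  set J := ∫ t in Set.Ioc z 0, Real.exp (-t ^ 2 / 2) with hJdef
  have hsplit : I = J + S := by
    rw [hIdef, gauss_int_split hz.le, gauss_int_zero]
  have hJ0 : 0 ≤ J :=
    setIntegral_nonneg measurableSet_Ioc (fun t _ => (Real.exp_pos _).le)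
  have hJle : J ≤ -z := by
    have h1 : J ≤ ∫ t in Set.Ioc z 0, (1 : ℝ) := by
      apply setIntegral_mono_on gauss_integrable.integrableOn
        (integrableOn_const measure_Ioc_lt_top.ne) measurableSet_Ioc
      intro t _
      exact Real.exp_le_one_iff.mpr (by nlinarith [sq_nonneg t])
    have h2 : (∫ t in Set.Ioc z 0, (1 : ℝ)) = -z := by
      rw [setIntegral_const, smul_eq_mul, mul_one, Real.volume_real_Ioc_of_le hz.le]
      ring
    linarith
  have hIS : S ≤ I := by linarith
  have hISz : I ≤ S - z := by linarith
  have habs : |z| = -z := abs_of_neg hz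
  have hkey : (z + c) * I < E := by
    rcases le_or_gt (z + c) 0 with h | h
    · exact lt_of_le_of_lt (mul_nonpos_of_nonpos_of_nonneg h hIpos.le) hEpos
    · have h1 : (z + c) * I ≤ (z + c) * (S - z) :=
        mul_le_mul_of_nonneg_left hISz h.le
      have h2 : 1 - z ^ 2 / 2 ≤ E := by
        have := Real.add_one_le_exp (-z ^ 2 / 2)
        rw [hEdef]; linarith
      have h3 : (z + c) * (S - z) < 1 - z ^ 2 / 2 := by
        nlinarith [mul_pos (neg_pos.mpr hz) (sub_pos.mpr hcltS), sq_nonneg z]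
      linarith
  have hcond : condMean z = E / I - z := rfl
  constructor
  · rw [hcond]
    apply max_lt
    · rw [habs]
      have : 0 < E / I := div_pos hEpos hIpos
      linarith
    · have : z + c < E / I := by
        rw [lt_div_iff₀ hIpos]; exact hkey
      linarith
  · rw [hcond, habs]
    have hE1 : E < 1 := Real.exp_lt_one_iff.mpr (by nlinarith)
    have : E / I < c := by
      rw [div_lt_iff₀ hIpos]
      nlinarith
    linarith
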